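/- Let T be a bounded self-adjoint operator on a separable infinite-dimensional complex Hilbert space H with purely continuous spectrum, and let x ∈ σ(T). Then the set G(x) := {ψ ∈ H : d⁻_{μ_ψ^T}(x) = 0 and d⁺_{μ_ψ^T}(x) = ∞} is generic in H, i.e., it contains a dense G_δ subset of H. -/

import Mathlib

open MeasureTheory Filter Set Metric
open scoped ENNReal Topology Classical

noncomputable section

/-- `μ` is uniformly `α`-Hölder continuous: there is `C > 0` with
`μ(I) < C |I|^α` for every (nondegenerate) interval `I` with `|I| < 1`. -/
def UnifHolder (μ : Measure ℝ) (α : ℝ) : Prop :=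
  ∃ C > (0 : ℝ), ∀ a b : ℝ, a < b → b - a < 1 →
    μ (Set.Icc a b) < ENNReal.ofReal (C * (b - a) ^ α)

/-- The Fourier transform `μ̂(s) = ∫ e^{-isx} dμ(x)` of a finite Borel measure on `ℝ`. -/
def measureFT (μ : Measure ℝ) (s : ℝ) : ℂ :=
  ∫ x : ℝ, Complex.exp (-(s * x) * Complex.I) ∂μ

/-- The time-average quantum return probability
`W_μ(t) = (1/t) ∫_0^t |μ̂(s)|² ds`. -/
def Wavg (μ : Measure ℝ) (t : ℝ) : ℝ :=
  (1 / t) * ∫ s in Set.Ioc (0 : ℝ) t, ‖measureFT μ s‖ ^ 2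

/-- `μ` is the spectral measure of the pair `(T, ψ)`: it is finite, vanishes outside
the spectrum of `T`, and `∫ f dμ = ⟨ψ, f(T)ψ⟩` for every continuous `f : ℝ → ℝ`,
where `f(T)` is given by the continuous functional calculus. -/
def IsSpectralMeasure {H : Type*} [NormedAddCommGroup H] [InnerProductSpace ℂ H]
    [CompleteSpace H] (T : H →L[ℂ] H) (ψ : H) (μ : Measure ℝ) : Prop :=
  IsFiniteMeasure μ ∧ μ {x : ℝ | (x : ℂ) ∉ spectrum ℂ T} = 0 ∧
    ∀ f : C(ℝ, ℝ), ∫ x, f x ∂μ = (inner ℂ ψ ((cfc (f : ℝ → ℝ) T) ψ) : ℂ).re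

/-- The real part of the spectrum of a bounded operator. -/
def realSpectrum {H : Type*} [NormedAddCommGroup H] [InnerProductSpace ℂ H]
    [CompleteSpace H] (T : H →L[ℂ] H) : Set ℝ :=
  {x : ℝ | (x : ℂ) ∈ spectrum ℂ T}

/-- `μ` is `α`-Hausdorff continuous: `μ(Λ) = 0` for every Borel set `Λ` with
`h^α(Λ) = 0`. -/
def HausdorffCont (μ : Measure ℝ) (α : ℝ) : Prop :=
  ∀ Λ : Set ℝ, MeasurableSet Λ → μH[α] Λ = 0 → μ Λ = 0

/-- The lower pointwise scaling exponent `d⁻_μ(x)`, with value `∞` when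
`μ(B(x;ε)) = 0` for some `ε > 0`. -/
def dLow (μ : Measure ℝ) (x : ℝ) : EReal :=
  if ∃ ε > (0 : ℝ), μ (Metric.ball x ε) = 0 then ⊤
  else Filter.liminf
    (fun ε : ℝ => ((Real.log (μ (Metric.ball x ε)).toReal / Real.log ε : ℝ) : EReal))
    (𝓝[>] (0 : ℝ))

/-- The upper pointwise scaling exponent `d⁺_μ(x)`, with value `∞` when
`μ(B(x;ε)) = 0` for some `ε > 0`. -/
def dUp (μ : Measure ℝ) (x : ℝ) : EReal :=
  if ∃ ε > (0 : ℝ), μ (Metric.ball x ε) = 0 then ⊤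
  else Filter.limsup
    (fun ε : ℝ => ((Real.log (μ (Metric.ball x ε)).toReal / Real.log ε : ℝ) : EReal))
    (𝓝[>] (0 : ℝ))

/-- The lower correlation dimension `D⁻_μ(2)`. -/
def DLow2 (μ : Measure ℝ) : EReal :=
  Filter.liminf
    (fun ε : ℝ =>
      ((Real.log (∫ x, (μ (Metric.ball x ε)).toReal ∂μ) / Real.log ε : ℝ) : EReal))
    (𝓝[>] (0 : ℝ))

/-- The upper correlation dimension `D⁺_μ(2)`. -/
def DUp2 (μ : Measure ℝ) : EReal :=
  Filter.limsup
    (fun ε : ℝ =>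
      ((Real.log (∫ x, (μ (Metric.ball x ε)).toReal ∂μ) / Real.log ε : ℝ) : EReal))
    (𝓝[>] (0 : ℝ))

/-- A set is generic (residual / comeagre in the Baire sense used in the paper)
if it contains a dense `G_δ` set. -/
def Generic {X : Type*} [TopologicalSpace X] (A : Set X) : Prop :=
  ∃ S : Set X, S ⊆ A ∧ IsGδ S ∧ Dense S


/-! ### Auxiliary machinery for `stmt_5` -/

namespace Stmt5Aux

/-- Piecewise-linear bump: equal to `1` on `|y-x| ≤ δ`, `0` for `|y-x| ≥ 2δ`. -/
def pb (x δ : ℝ) : C(ℝ, ℝ) :=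
  ⟨fun y => max 0 (min 1 (2 - |y - x| / δ)),
    continuous_const.max (continuous_const.min (continuous_const.sub
      ((continuous_id.sub continuous_const).abs.div_const δ)))⟩

lemma pb_apply (x δ y : ℝ) : pb x δ y = max 0 (min 1 (2 - |y - x| / δ)) := rfl

lemma pb_nonneg (x δ y : ℝ) : 0 ≤ pb x δ y := le_max_left _ _

lemma pb_le_one (x δ y : ℝ) : pb x δ y ≤ 1 :=
  max_le zero_le_one (min_le_left _ _)

lemma pb_one {x δ y : ℝ} (hδ : 0 < δ) (h : |y - x| ≤ δ) : pb x δ y = 1 := by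
  have h1 : |y - x| / δ ≤ 1 := (div_le_one hδ).mpr (by linarith)
  have h2 : (1:ℝ) ≤ 2 - |y - x| / δ := by linarith
  rw [pb_apply, min_eq_left h2, max_eq_right zero_le_one]

lemma pb_zero {x δ y : ℝ} (hδ : 0 < δ) (h : 2 * δ ≤ |y - x|) : pb x δ y = 0 := by
  have h1 : (2:ℝ) ≤ |y - x| / δ := (le_div_iff₀ hδ).mpr (by linarith)
  have h2 : min 1 (2 - |y - x| / δ) ≤ 0 := le_trans (min_le_right _ _) (by linarith)
  rw [pb_apply, max_eq_left h2]

lemma pb_supp {x δ y : ℝ} (hδ : 0 < δ) (h : pb x δ y ≠ 0) : |y - x| < 2 * δ := by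
  by_contra hc
  push_neg at hc
  exact h (pb_zero hδ hc)

lemma integrable01 (μ : Measure ℝ) [IsFiniteMeasure μ] {f : ℝ → ℝ} (hf : Continuous f)
    (h0 : ∀ y, 0 ≤ f y) (h1 : ∀ y, f y ≤ 1) : Integrable f μ :=
  (integrable_const 1).mono' hf.aestronglyMeasurable
    (Filter.Eventually.of_forall fun y => by
      rw [Real.norm_eq_abs, abs_of_nonneg (h0 y)]; exact h1 y)

lemma meas_le_integral (μ : Measure ℝ) [IsFiniteMeasure μ] {f : ℝ → ℝ} (hf : Continuous f)
    (h0 : ∀ y, 0 ≤ f y) (h1 : ∀ y, f y ≤ 1) {S : Set ℝ} (hS : MeasurableSet S)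
    (hSf : ∀ y ∈ S, 1 ≤ f y) : (μ S).toReal ≤ ∫ y, f y ∂μ := by
  have h := integral_indicator_const (1:ℝ) hS (μ := μ)
  calc (μ S).toReal = ∫ y, S.indicator (fun _ => (1:ℝ)) y ∂μ := by
        rw [h, smul_eq_mul, mul_one]; rfl
  _ ≤ ∫ y, f y ∂μ := by
      refine integral_mono ((integrable_const (1:ℝ)).indicator hS) (integrable01 μ hf h0 h1) ?_
      intro y
      by_cases hy : y ∈ S
      · rw [Set.indicator_of_mem hy]; exact hSf y hy
      · rw [Set.indicator_of_notMem hy]; exact h0 y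

lemma integral_le_meas (μ : Measure ℝ) [IsFiniteMeasure μ] {f : ℝ → ℝ} (hf : Continuous f)
    (h0 : ∀ y, 0 ≤ f y) (h1 : ∀ y, f y ≤ 1) {S : Set ℝ} (hS : MeasurableSet S)
    (hSf : ∀ y, y ∉ S → f y = 0) : ∫ y, f y ∂μ ≤ (μ S).toReal := by
  have h := integral_indicator_const (1:ℝ) hS (μ := μ)
  calc ∫ y, f y ∂μ ≤ ∫ y, S.indicator (fun _ => (1:ℝ)) y ∂μ := by
        refine integral_mono (integrable01 μ hf h0 h1) ((integrable_const (1:ℝ)).indicator hS) ?_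
        intro y
        by_cases hy : y ∈ S
        · rw [Set.indicator_of_mem hy]; exact h1 y
        · rw [Set.indicator_of_notMem hy, hSf y hy]
  _ = (μ S).toReal := by rw [h, smul_eq_mul, mul_one]; rfl

lemma small_closedBall (μ : Measure ℝ) [IsFiniteMeasure μ] (x : ℝ) (hx : μ {x} = 0)
    {c : ℝ} (hc : 0 < c) : ∃ δ : ℝ, 0 < δ ∧ (μ (Metric.closedBall x δ)).toReal < c := by
  have hinter : (⋂ n : ℕ, Metric.closedBall x (1/((n:ℝ)+1))) = {x} := by
    apply Set.Subset.antisymm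
    · intro y hy
      simp only [Set.mem_iInter, Metric.mem_closedBall] at hy
      have hle : dist y x ≤ 0 :=
        ge_of_tendsto' tendsto_one_div_add_atTop_nhds_zero_nat (fun n => hy n)
      simp only [Set.mem_singleton_iff]
      exact dist_le_zero.mp hle
    · intro y hy
      simp only [Set.mem_singleton_iff] at hy
      subst hy
      simp only [Set.mem_iInter, Metric.mem_closedBall, dist_self]
      intro n
      positivity
  have htend := MeasureTheory.tendsto_measure_iInter_atTop (μ := μ)
      (s := fun n : ℕ => Metric.closedBall x (1/((n:ℝ)+1)))
      (fun _ => measurableSet_closedBall.nullMeasurableSet)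
      (fun i j hij => Metric.closedBall_subset_closedBall
        (one_div_le_one_div_of_le (by positivity) (by exact_mod_cast Nat.succ_le_succ hij)))
      ⟨0, measure_ne_top μ _⟩
  rw [hinter, hx] at htend
  have hev : ∀ᶠ n : ℕ in atTop, μ (Metric.closedBall x (1/((n:ℝ)+1))) < ENNReal.ofReal c := by
    refine htend.eventually_lt_const ?_
    simpa using ENNReal.ofReal_pos.mpr hc
  obtain ⟨n, hn⟩ := hev.exists
  refine ⟨1/((n:ℝ)+1), by positivity, ?_⟩
  exact (ENNReal.lt_ofReal_iff_toReal_lt (measure_ne_top μ _)).mp hn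

section Spec

variable {H : Type*} [NormedAddCommGroup H] [InnerProductSpace ℂ H] [CompleteSpace H]

lemma adjoint_cfc (T : H →L[ℂ] H) (f : ℝ → ℝ) :
    ContinuousLinearMap.adjoint (cfc f T) = cfc f T := by
  rw [← ContinuousLinearMap.star_eq_adjoint]
  exact cfc_predicate f T

lemma inner_move (T : H →L[ℂ] H) (f : ℝ → ℝ) (u v : H) :
    (inner ℂ u ((cfc f T) v) : ℂ) = inner ℂ ((cfc f T) u) v := by
  conv_lhs => rw [← adjoint_cfc T f]
  exact ContinuousLinearMap.adjoint_inner_right _ _ _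

lemma cfc_cm_mul (T : H →L[ℂ] H) (f g : C(ℝ, ℝ)) :
    cfc (⇑(f * g)) T = cfc (⇑f) T * cfc (⇑g) T := by
  have h : ⇑(f * g) = fun y => f y * g y := by ext y; simp
  rw [h]
  exact cfc_mul _ _ T (map_continuous f).continuousOn (map_continuous g).continuousOn

lemma cont_quad (A : H →L[ℂ] H) : Continuous fun ψ : H => (inner ℂ ψ (A ψ) : ℂ).re :=
  Complex.continuous_re.comp (continuous_id.inner A.continuous)

lemma sm_normsq (T : H →L[ℂ] H) {ψ : H} {μ : Measure ℝ}
    (hμ : IsSpectralMeasure T ψ μ) (g : C(ℝ, ℝ)) :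
    ∫ y, (g y)^2 ∂μ = ‖cfc (⇑g) T ψ‖^2 := by
  have h1 := hμ.2.2 (g * g)
  rw [cfc_cm_mul T g g, ContinuousLinearMap.mul_apply,
    inner_move T (⇑g) ψ (cfc (⇑g) T ψ)] at h1
  have h4 := inner_self_eq_norm_sq (𝕜 := ℂ) (cfc (⇑g) T ψ)
  rw [RCLike.re_to_complex] at h4
  rw [h4] at h1
  rw [← h1]
  refine integral_congr_ae (Filter.Eventually.of_forall fun y => ?_)
  simp [pow_two]

lemma sm_comp (T : H →L[ℂ] H) {ψ : H} {μ ν : Measure ℝ}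
    (f g : C(ℝ, ℝ)) (hμ : IsSpectralMeasure T ψ μ)
    (hν : IsSpectralMeasure T (cfc (⇑g) T ψ) ν) :
    ∫ y, f y ∂ν = ∫ y, f y * (g y)^2 ∂μ := by
  have h1 := hν.2.2 f
  have h2 := hμ.2.2 (g * (f * g))
  rw [cfc_cm_mul T g (f * g), cfc_cm_mul T f g, ContinuousLinearMap.mul_apply,
    ContinuousLinearMap.mul_apply, inner_move T (⇑g) ψ _] at h2
  rw [h1, ← h2]
  refine integral_congr_ae (Filter.Eventually.of_forall fun y => ?_)
  simp only [ContinuousMap.mul_apply]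
  ring

lemma sm_smul (T : H →L[ℂ] H) {ψ : H} {μ ν : Measure ℝ}
    (c : ℝ) (f : C(ℝ, ℝ)) (hμ : IsSpectralMeasure T ψ μ)
    (hν : IsSpectralMeasure T ((c : ℂ) • ψ) ν) :
    ∫ y, f y ∂ν = c^2 * ∫ y, f y ∂μ := by
  have h1 := hν.2.2 f
  have h2 : (inner ℂ ((c:ℂ) • ψ) ((cfc (⇑f) T) ((c:ℂ) • ψ)) : ℂ)
      = ((c^2 : ℝ) : ℂ) * inner ℂ ψ ((cfc (⇑f) T) ψ) := by
    rw [_root_.map_smul, inner_smul_left, inner_smul_right, Complex.conj_ofReal]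
    push_cast
    ring
  rw [h1, h2, Complex.re_ofReal_mul, ← hμ.2.2 f]

lemma sm_add_lower (T : H →L[ℂ] H) {a b : H}
    {μa μb μab : Measure ℝ} (f : C(ℝ, ℝ)) (hf0 : ∀ y, 0 ≤ f y)
    (hμa : IsSpectralMeasure T a μa) (hμb : IsSpectralMeasure T b μb)
    (hμab : IsSpectralMeasure T (a + b) μab) :
    (1/2) * ∫ y, f y ∂μb - ∫ y, f y ∂μa ≤ ∫ y, f y ∂μab := by
  set s : C(ℝ, ℝ) := ⟨fun y => Real.sqrt (f y), Real.continuous_sqrt.comp (map_continuous f)⟩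
    with hsdef
  have hsq : ∀ y, (s y)^2 = f y := fun y => Real.sq_sqrt (hf0 y)
  have key : ∀ (ψ : H) (μ : Measure ℝ), IsSpectralMeasure T ψ μ →
      ∫ y, f y ∂μ = ‖cfc (⇑s) T ψ‖^2 := by
    intro ψ μ hμ
    rw [← sm_normsq T hμ s]
    exact integral_congr_ae (Filter.Eventually.of_forall fun y => (hsq y).symm)
  rw [key a μa hμa, key b μb hμb, key _ μab hμab]
  have hadd : cfc (⇑s) T (a + b) = cfc (⇑s) T a + cfc (⇑s) T b := map_add _ a b
  rw [hadd]
  have h1 : ‖cfc (⇑s) T b‖ ≤ ‖cfc (⇑s) T a + cfc (⇑s) T b‖ + ‖cfc (⇑s) T a‖ := by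
    have h2 : cfc (⇑s) T b = (cfc (⇑s) T a + cfc (⇑s) T b) - cfc (⇑s) T a := by abel
    calc ‖cfc (⇑s) T b‖ = ‖(cfc (⇑s) T a + cfc (⇑s) T b) - cfc (⇑s) T a‖ := by rw [← h2]
    _ ≤ _ := norm_sub_le _ _
  nlinarith [norm_nonneg (cfc (⇑s) T a), norm_nonneg (cfc (⇑s) T b),
    norm_nonneg (cfc (⇑s) T a + cfc (⇑s) T b),
    sq_nonneg (‖cfc (⇑s) T a + cfc (⇑s) T b‖ - ‖cfc (⇑s) T a‖)]

/-- The open sets used for the `d⁺ = ∞` part. -/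
def GAset (T : H →L[ℂ] H) (x : ℝ) (n k : ℕ) : Set H :=
  ⋃ (ε : ℝ) (_ : 0 < ε ∧ ε < 1/((k:ℝ)+1)),
    {ψ : H | (inner ℂ ψ ((cfc (⇑(pb x ε)) T) ψ) : ℂ).re < ε^(n+1)}

/-- The open sets used for the `d⁻ = 0` part. -/
def GBset (T : H →L[ℂ] H) (x : ℝ) (m k : ℕ) : Set H :=
  ⋃ (ε : ℝ) (_ : 0 < ε ∧ ε < 1/((k:ℝ)+1) ∧ ε < 1),
    {ψ : H | ε ^ ((1:ℝ)/((m:ℝ)+1)) < (inner ℂ ψ ((cfc (⇑(pb x (ε/2))) T) ψ) : ℂ).re}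

lemma GAset_open (T : H →L[ℂ] H) (x : ℝ) (n k : ℕ) : IsOpen (GAset T x n k) :=
  isOpen_iUnion fun _ => isOpen_iUnion fun _ => isOpen_lt (cont_quad _) continuous_const

lemma GBset_open (T : H →L[ℂ] H) (x : ℝ) (m k : ℕ) : IsOpen (GBset T x m k) :=
  isOpen_iUnion fun _ => isOpen_iUnion fun _ => isOpen_lt continuous_const (cont_quad _)

lemma mem_GAset {T : H →L[ℂ] H} {x : ℝ} {n k : ℕ} {ψ : H} :
    ψ ∈ GAset T x n k ↔ ∃ ε : ℝ, (0 < ε ∧ ε < 1/((k:ℝ)+1)) ∧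
      (inner ℂ ψ ((cfc (⇑(pb x ε)) T) ψ) : ℂ).re < ε^(n+1) := by
  simp only [GAset, Set.mem_iUnion, Set.mem_setOf_eq, exists_prop]

lemma mem_GBset {T : H →L[ℂ] H} {x : ℝ} {m k : ℕ} {ψ : H} :
    ψ ∈ GBset T x m k ↔ ∃ ε : ℝ, (0 < ε ∧ ε < 1/((k:ℝ)+1) ∧ ε < 1) ∧
      ε ^ ((1:ℝ)/((m:ℝ)+1)) < (inner ℂ ψ ((cfc (⇑(pb x (ε/2))) T) ψ) : ℂ).re := by
  simp only [GBset, Set.mem_iUnion, Set.mem_setOf_eq, exists_prop]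

lemma EReal.eq_top_of_forall_nat {L : EReal} (h : ∀ n : ℕ, ((n:ℝ) : EReal) ≤ L) : L = ⊤ := by
  by_contra hne
  have h0 : ((0:ℝ) : EReal) ≤ L := by simpa using h 0
  have hLbot : L ≠ ⊥ := by
    intro hb
    rw [hb] at h0
    exact EReal.coe_ne_bot _ (le_bot_iff.mp h0)
  have hcoe : ((L.toReal : ℝ) : EReal) = L := EReal.coe_toReal hne hLbot
  obtain ⟨n, hn⟩ := exists_nat_gt L.toReal
  have h2 := h n
  rw [← hcoe, EReal.coe_le_coe_iff] at h2
  linarith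

end Spec

end Stmt5Aux

open Stmt5Aux

set_option maxHeartbeats 2000000 in
/-- For a bounded self-adjoint operator with purely continuous spectrum
and `x ∈ σ(T)`, the set `G(x) = {ψ | d⁻_{μ_ψ}(x) = 0 and d⁺_{μ_ψ}(x) = ∞}` is generic. -/
theorem stmt_5 {H : Type*} [NormedAddCommGroup H] [InnerProductSpace ℂ H] [CompleteSpace H]
    [TopologicalSpace.SeparableSpace H] (hinf : ¬ FiniteDimensional ℂ H)
    (T : H →L[ℂ] H) (hT : IsSelfAdjoint T)
    (μm : H → Measure ℝ) (hμm : ∀ ψ : H, IsSpectralMeasure T ψ (μm ψ))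
    (hcont : ∀ (ψ : H) (x : ℝ), μm ψ {x} = 0)
    (x : ℝ) (hx : x ∈ realSpectrum T) :
    Generic {ψ : H | dLow (μm ψ) x = 0 ∧ dUp (μm ψ) x = ⊤} := by
  classical
  have hxR : x ∈ spectrum ℝ T := by
    have h := hT.spectrumRestricts.apply_mem hx
    simpa using h
  have hQ : ∀ (f : C(ℝ, ℝ)) (ψ : H),
      ∫ y, f y ∂(μm ψ) = (inner ℂ ψ ((cfc (⇑f) T) ψ) : ℂ).re := fun f ψ => (hμm ψ).2.2 f
  -- density of the `GAset`s
  have hGAdense : ∀ n k : ℕ, Dense (GAset T x n k) := by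
    intro n k
    rw [Metric.dense_iff]
    intro ψ r hr
    haveI := (hμm ψ).1
    obtain ⟨δ0, hδ0, hsm⟩ := small_closedBall (μm ψ) x (hcont ψ x) (c := r^2) (by positivity)
    set δ : ℝ := δ0/4 with hδdef
    have hδ : 0 < δ := by positivity
    set g : C(ℝ, ℝ) := 1 - pb x (2*δ) with hgdef
    haveI := (hμm (cfc (⇑g) T ψ)).1
    -- distance estimate
    have hgsub : cfc (⇑g) T = 1 - cfc (⇑(pb x (2*δ))) T := by
      have hco : ⇑g = fun y => (1:ℝ) - (pb x (2*δ)) y := by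
        ext y
        simp [hgdef]
      rw [hco]
      have h1 : cfc (fun y => (1:ℝ) - (pb x (2*δ)) y) T
          = cfc (fun _ : ℝ => (1:ℝ)) T - cfc (⇑(pb x (2*δ))) T :=
        cfc_sub _ _ T continuousOn_const (map_continuous _).continuousOn
      rw [h1]
      congr 1
      exact cfc_one ℝ T hT
    have hsub : ψ - cfc (⇑g) T ψ = cfc (⇑(pb x (2*δ))) T ψ := by
      rw [hgsub]
      simp [ContinuousLinearMap.sub_apply]
    have hle : ∫ y, ((pb x (2*δ)) y)^2 ∂(μm ψ) ≤ ((μm ψ) (Metric.closedBall x δ0)).toReal := by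
      refine integral_le_meas (μm ψ) ((map_continuous (pb x (2*δ))).pow 2) ?_ ?_
        measurableSet_closedBall ?_
      · intro y; simp only [Pi.pow_apply]; positivity
      · intro y
        simp only [Pi.pow_apply]
        nlinarith [pb_nonneg x (2*δ) y, pb_le_one x (2*δ) y]
      · intro y hy
        simp only [Metric.mem_closedBall, Real.dist_eq, not_le] at hy
        have h2 : 2*(2*δ) ≤ |y - x| := by
          have h3 : 2*(2*δ) = δ0 := by rw [hδdef]; ring
          linarith
        simp only [Pi.pow_apply]
        rw [pb_zero (by positivity) h2]
        ring
    have hdist : ‖ψ - cfc (⇑g) T ψ‖^2 < r^2 := by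
      rw [hsub, ← sm_normsq T (hμm ψ) (pb x (2*δ))]
      exact lt_of_le_of_lt hle hsm
    have hnorm : ‖ψ - cfc (⇑g) T ψ‖ < r := lt_of_pow_lt_pow_left₀ 2 hr.le hdist
    -- membership
    set ε : ℝ := min δ (1/(2*((k:ℝ)+1))) with hεdef
    have hε0 : 0 < ε := lt_min hδ (by positivity)
    have hεk : ε < 1/((k:ℝ)+1) := by
      refine lt_of_le_of_lt (min_le_right _ _) ?_
      rw [div_lt_div_iff₀ (by positivity) (by positivity)]
      nlinarith [Nat.cast_nonneg (α := ℝ) k]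
    refine ⟨cfc (⇑g) T ψ, ?_, ?_⟩
    · rw [Metric.mem_ball, dist_eq_norm, norm_sub_rev]
      exact hnorm
    · refine mem_GAset.mpr ⟨ε, ⟨hε0, hεk⟩, ?_⟩
      rw [← hQ (pb x ε) (cfc (⇑g) T ψ)]
      have hz : ∫ y, (pb x ε) y ∂(μm (cfc (⇑g) T ψ)) = 0 := by
        rw [sm_comp T (pb x ε) g (hμm ψ) (hμm _)]
        have hfun : (fun y => (pb x ε) y * (g y)^2) = fun _ => (0:ℝ) := by
          funext y
          by_cases hy : (pb x ε) y = 0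
          · rw [hy, zero_mul]
          · have h1 : |y - x| < 2*ε := pb_supp hε0 hy
            have h3 : ε ≤ δ := min_le_left _ _
            have h2 : (pb x (2*δ)) y = 1 := pb_one (by positivity) (by linarith)
            have h4 : g y = 0 := by
              simp [hgdef, ContinuousMap.sub_apply, h2]
            rw [h4]
            ring
        rw [hfun]
        simp
      rw [hz]
      positivity
  -- density of the `GBset`s
  have hGBdense : ∀ m k : ℕ, Dense (GBset T x m k) := by
    intro m k
    rw [Metric.dense_iff]
    intro ψ r hr
    haveI := (hμm ψ).1
    set t : ℝ := r/2 with htdef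
    have ht : 0 < t := by positivity
    obtain ⟨δ1, hδ1, hsm⟩ := small_closedBall (μm ψ) x (hcont ψ x) (c := t^2/8) (by positivity)
    set c0 : ℝ := min (t^2/8) (1/2) with hc0def
    have hc0 : 0 < c0 := lt_min (by positivity) (by norm_num)
    set ε : ℝ := min δ1 (min (c0^(m+1)) (1/(2*((k:ℝ)+1)))) with hεdef
    have hε0 : 0 < ε := lt_min hδ1 (lt_min (by positivity) (by positivity))
    have hεδ : ε ≤ δ1 := min_le_left _ _
    have hεc : ε ≤ c0^(m+1) := le_trans (min_le_right _ _) (min_le_left _ _)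
    have hεk : ε < 1/((k:ℝ)+1) := by
      refine lt_of_le_of_lt (le_trans (min_le_right _ _) (min_le_right _ _)) ?_
      rw [div_lt_div_iff₀ (by positivity) (by positivity)]
      nlinarith [Nat.cast_nonneg (α := ℝ) k]
    have hc0half : c0 ≤ 1/2 := min_le_right _ _
    have hε1 : ε < 1 := by
      have h1 : c0^(m+1) ≤ c0 := pow_le_of_le_one hc0.le (by linarith) (Nat.succ_ne_zero m)
      have h2 := le_trans hεc (le_trans h1 hc0half)
      linarith
    have hc0t : c0 ≤ t^2/8 := min_le_left _ _
    have hrpow : ε ^ ((1:ℝ)/((m:ℝ)+1)) ≤ c0 := by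
      have hne : ((m:ℝ)+1) ≠ 0 := by positivity
      have h1 : ε ^ ((1:ℝ)/((m:ℝ)+1)) ≤ (c0^(m+1)) ^ ((1:ℝ)/((m:ℝ)+1)) :=
        Real.rpow_le_rpow hε0.le hεc (by positivity)
      have h2 : ((c0^(m+1) : ℝ)) ^ ((1:ℝ)/((m:ℝ)+1)) = c0 := by
        rw [← Real.rpow_natCast c0 (m+1), ← Real.rpow_mul hc0.le]
        push_cast
        rw [mul_one_div, div_self hne, Real.rpow_one]
      rw [h2] at h1
      exact h1
    -- a vector with spectral measure concentrated near x
    have hbx : pb x (ε/8) x = 1 := pb_one (by positivity) (by rw [sub_self, abs_zero]; positivity)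
    have hbT : cfc (⇑(pb x (ε/8))) T ≠ 0 := by
      intro h0
      have h1 : cfc (⇑(pb x (ε/8))) T = cfc (0 : ℝ → ℝ) T := by rw [h0, cfc_zero]
      have h2 := eqOn_of_cfc_eq_cfc h1 (map_continuous (pb x (ε/8))).continuousOn
        continuousOn_const hT
      have h3 := h2 hxR
      rw [hbx] at h3
      exact one_ne_zero h3
    obtain ⟨η, hη⟩ : ∃ η : H, cfc (⇑(pb x (ε/8))) T η ≠ 0 := by
      by_contra hcon
      push_neg at hcon
      exact hbT (ContinuousLinearMap.ext fun η => by simp [hcon η])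
    have hφ0 : 0 < ‖cfc (⇑(pb x (ε/8))) T η‖ := norm_pos_iff.mpr hη
    have hmass : ∫ y, (pb x (ε/2)) y ∂(μm (cfc (⇑(pb x (ε/8))) T η))
        = ‖cfc (⇑(pb x (ε/8))) T η‖^2 := by
      rw [sm_comp T (pb x (ε/2)) (pb x (ε/8)) (hμm η) (hμm _),
        ← sm_normsq T (hμm η) (pb x (ε/8))]
      refine integral_congr_ae (Filter.Eventually.of_forall fun y => ?_)
      dsimp only
      by_cases hy : (pb x (ε/8)) y = 0
      · rw [hy]
        ring
      · have h1 : |y - x| < 2*(ε/8) := pb_supp (by positivity) hy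
        have h2 : (pb x (ε/2)) y = 1 := pb_one (by positivity) (by linarith)
        rw [h2, one_mul]
    set s0 : ℝ := t/‖cfc (⇑(pb x (ε/8))) T η‖ with hs0def
    have hs0 : 0 < s0 := by positivity
    have hζnorm : ‖(s0 : ℂ) • cfc (⇑(pb x (ε/8))) T η‖ = t := by
      rw [norm_smul, Complex.norm_real, Real.norm_eq_abs, abs_of_pos hs0, hs0def]
      exact div_mul_cancel₀ t hφ0.ne'
    have hζmass : ∫ y, (pb x (ε/2)) y ∂(μm ((s0 : ℂ) • cfc (⇑(pb x (ε/8))) T η)) = t^2 := by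
      rw [sm_smul T s0 (pb x (ε/2)) (hμm (cfc (⇑(pb x (ε/8))) T η)) (hμm _), hmass, hs0def]
      field_simp
    have hψsmall : ∫ y, (pb x (ε/2)) y ∂(μm ψ) < t^2/8 := by
      have h1 : ∫ y, (pb x (ε/2)) y ∂(μm ψ) ≤ ((μm ψ) (Metric.closedBall x ε)).toReal := by
        refine integral_le_meas (μm ψ) (map_continuous _) (pb_nonneg x (ε/2))
          (pb_le_one x (ε/2)) measurableSet_closedBall ?_
        intro y hy
        simp only [Metric.mem_closedBall, Real.dist_eq, not_le] at hy
        exact pb_zero (by positivity) (by linarith)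
      have h2 : ((μm ψ) (Metric.closedBall x ε)).toReal
          ≤ ((μm ψ) (Metric.closedBall x δ1)).toReal :=
        ENNReal.toReal_mono (measure_ne_top _ _)
          (measure_mono (Metric.closedBall_subset_closedBall hεδ))
      linarith
    have hlow := sm_add_lower T (pb x (ε/2)) (pb_nonneg x (ε/2)) (hμm ψ)
      (hμm ((s0 : ℂ) • cfc (⇑(pb x (ε/8))) T η)) (hμm (ψ + (s0 : ℂ) • cfc (⇑(pb x (ε/8))) T η))
    rw [hζmass] at hlow
    refine ⟨ψ + (s0 : ℂ) • cfc (⇑(pb x (ε/8))) T η, ?_, ?_⟩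
    · rw [Metric.mem_ball, dist_eq_norm, add_sub_cancel_left, hζnorm, htdef]
      linarith
    · refine mem_GBset.mpr ⟨ε, ⟨hε0, hεk, hε1⟩, ?_⟩
      rw [← hQ (pb x (ε/2)) (ψ + (s0 : ℂ) • cfc (⇑(pb x (ε/8))) T η)]
      have h3 : ε ^ ((1:ℝ)/((m:ℝ)+1)) ≤ t^2/8 := le_trans hrpow hc0t
      linarith
  -- the dense Gδ set
  refine ⟨⋂ p : ℕ × ℕ, (GAset T x p.1 p.2 ∩ GBset T x p.1 p.2), ?_, ?_, ?_⟩
  · -- inclusion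
    intro ψ hψ
    haveI := (hμm ψ).1
    have hAmem : ∀ n k : ℕ, ψ ∈ GAset T x n k := fun n k => (Set.mem_iInter.mp hψ (n, k)).1
    have hBmem : ∀ m k : ℕ, ψ ∈ GBset T x m k := fun m k => (Set.mem_iInter.mp hψ (m, k)).2
    have hAmed : ∀ n k : ℕ, ∃ ε : ℝ, 0 < ε ∧ ε < 1/((k:ℝ)+1) ∧
        ((μm ψ) (Metric.ball x ε)).toReal < ε^(n+1) := by
      intro n k
      obtain ⟨ε, ⟨hε0, hεk⟩, hlt⟩ := mem_GAset.mp (hAmem n k)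
      refine ⟨ε, hε0, hεk, ?_⟩
      rw [← hQ (pb x ε) ψ] at hlt
      have h1 : ((μm ψ) (Metric.ball x ε)).toReal ≤ ((μm ψ) (Metric.closedBall x ε)).toReal :=
        ENNReal.toReal_mono (measure_ne_top _ _) (measure_mono Metric.ball_subset_closedBall)
      have h2 : ((μm ψ) (Metric.closedBall x ε)).toReal ≤ ∫ y, (pb x ε) y ∂(μm ψ) := by
        refine meas_le_integral (μm ψ) (map_continuous _) (pb_nonneg x ε) (pb_le_one x ε)
          measurableSet_closedBall ?_
        intro y hy
        rw [Metric.mem_closedBall, Real.dist_eq] at hy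
        exact le_of_eq (pb_one hε0 hy).symm
      linarith
    have hBmed : ∀ m k : ℕ, ∃ ε : ℝ, 0 < ε ∧ ε < 1/((k:ℝ)+1) ∧ ε < 1 ∧
        ε ^ ((1:ℝ)/((m:ℝ)+1)) < ((μm ψ) (Metric.ball x ε)).toReal := by
      intro m k
      obtain ⟨ε, ⟨hε0, hεk, hε1⟩, hlt⟩ := mem_GBset.mp (hBmem m k)
      refine ⟨ε, hε0, hεk, hε1, ?_⟩
      rw [← hQ (pb x (ε/2)) ψ] at hlt
      have h1 : ∫ y, (pb x (ε/2)) y ∂(μm ψ) ≤ ((μm ψ) (Metric.ball x ε)).toReal := by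
        refine integral_le_meas (μm ψ) (map_continuous _) (pb_nonneg x (ε/2))
          (pb_le_one x (ε/2)) measurableSet_ball ?_
        intro y hy
        rw [Metric.mem_ball, Real.dist_eq, not_lt] at hy
        exact pb_zero (by positivity) (by linarith)
      linarith
    have hpos : ∀ ε' : ℝ, 0 < ε' → (μm ψ) (Metric.ball x ε') ≠ 0 := by
      intro ε' hε'
      obtain ⟨k, hk⟩ := exists_nat_one_div_lt hε'
      obtain ⟨ε, hε0, hεk, hε1, hlt⟩ := hBmed 0 k
      have h1 : (0:ℝ) < ((μm ψ) (Metric.ball x ε)).toReal :=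
        lt_trans (Real.rpow_pos_of_pos hε0 _) hlt
      have h2 : (μm ψ) (Metric.ball x ε) ≠ 0 := by
        intro h0
        rw [h0] at h1
        simp at h1
      intro h0
      exact h2 (measure_mono_null (Metric.ball_subset_ball (le_of_lt (lt_trans hεk hk))) h0)
    have hne : ¬ ∃ ε > (0:ℝ), (μm ψ) (Metric.ball x ε) = 0 := by
      rintro ⟨ε', hε', h0⟩
      exact hpos ε' hε' h0
    constructor
    · -- dLow = 0
      unfold dLow
      rw [if_neg hne]
      refine le_antisymm ?_ ?_
      · -- liminf ≤ 0
        have hub : ∀ m : ℕ, Filter.liminf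
            (fun ε : ℝ => ((Real.log ((μm ψ) (Metric.ball x ε)).toReal / Real.log ε : ℝ) : EReal))
            (𝓝[>] (0:ℝ)) ≤ ((1/((m:ℝ)+1) : ℝ) : EReal) := by
          intro m
          refine Filter.liminf_le_of_frequently_le' ?_
          rw [(nhdsGT_basis (0:ℝ)).frequently_iff]
          intro a ha
          obtain ⟨k, hk⟩ := exists_nat_one_div_lt ha
          obtain ⟨ε, hε0, hεk, hε1, hlt⟩ := hBmed m k
          refine ⟨ε, ⟨hε0, lt_trans hεk hk⟩, ?_⟩
          rw [EReal.coe_le_coe_iff]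
          have hεlog : Real.log ε < 0 := Real.log_neg hε0 hε1
          have h1 : (1/((m:ℝ)+1)) * Real.log ε < Real.log (((μm ψ) (Metric.ball x ε)).toReal) := by
            have h2 := Real.log_lt_log (Real.rpow_pos_of_pos hε0 _) hlt
            rwa [Real.log_rpow hε0] at h2
          rw [div_le_iff_of_neg hεlog]
          exact h1.le
        by_contra hL
        push_neg at hL
        have hLne : Filter.liminf
            (fun ε : ℝ => ((Real.log ((μm ψ) (Metric.ball x ε)).toReal / Real.log ε : ℝ) : EReal))
            (𝓝[>] (0:ℝ)) ≠ ⊤ := by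
          intro htop
          have h1 := hub 0
          rw [htop] at h1
          exact EReal.coe_ne_top _ (top_le_iff.mp h1)
        have hLbot : Filter.liminf
            (fun ε : ℝ => ((Real.log ((μm ψ) (Metric.ball x ε)).toReal / Real.log ε : ℝ) : EReal))
            (𝓝[>] (0:ℝ)) ≠ ⊥ := by
          intro hbot
          rw [hbot] at hL
          exact not_lt_bot hL
        have hcoe := EReal.coe_toReal hLne hLbot
        have hLpos : 0 < (Filter.liminf
            (fun ε : ℝ => ((Real.log ((μm ψ) (Metric.ball x ε)).toReal / Real.log ε : ℝ) : EReal))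
            (𝓝[>] (0:ℝ))).toReal := by
          have h1 : ((0:ℝ) : EReal) < (((Filter.liminf
              (fun ε : ℝ => ((Real.log ((μm ψ) (Metric.ball x ε)).toReal / Real.log ε : ℝ) : EReal))
              (𝓝[>] (0:ℝ))).toReal : ℝ) : EReal) := by
            rw [hcoe]
            simpa using hL
          exact EReal.coe_lt_coe_iff.mp h1
        obtain ⟨m, hm⟩ := exists_nat_one_div_lt hLpos
        have h2 := hub m
        rw [← hcoe, EReal.coe_le_coe_iff] at h2
        linarith
      · -- 0 ≤ liminf
        obtain ⟨δ2, hδ2, hsm1⟩ := small_closedBall (μm ψ) x (hcont ψ x) (c := 1) one_pos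
        have hev : ∀ᶠ ε in 𝓝[>] (0:ℝ), ((0:ℝ) : EReal)
            ≤ ((Real.log ((μm ψ) (Metric.ball x ε)).toReal / Real.log ε : ℝ) : EReal) := by
          rw [(nhdsGT_basis (0:ℝ)).eventually_iff]
          refine ⟨min δ2 1, lt_min hδ2 one_pos, fun ε hε => ?_⟩
          obtain ⟨hε0, hεa⟩ := Set.mem_Ioo.mp hε
          rw [EReal.coe_le_coe_iff]
          have h1 : ((μm ψ) (Metric.ball x ε)).toReal ≤ ((μm ψ) (Metric.closedBall x δ2)).toReal :=
            ENNReal.toReal_mono (measure_ne_top _ _)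
              (measure_mono (le_trans Metric.ball_subset_closedBall
                (Metric.closedBall_subset_closedBall
                  (le_of_lt (lt_of_lt_of_le hεa (min_le_left _ _))))))
          have hlogμ : Real.log ((μm ψ) (Metric.ball x ε)).toReal ≤ 0 :=
            Real.log_nonpos ENNReal.toReal_nonneg (by linarith)
          have hlogε : Real.log ε < 0 :=
            Real.log_neg hε0 (lt_of_lt_of_le hεa (min_le_right _ _))
          exact div_nonneg_iff.mpr (Or.inr ⟨hlogμ, hlogε.le⟩)
        calc (0:EReal) = Filter.liminf (fun _ : ℝ => ((0:ℝ) : EReal)) (𝓝[>] (0:ℝ)) := by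
              rw [Filter.liminf_const]
              simp
        _ ≤ _ := Filter.liminf_le_liminf hev
    · -- dUp = ⊤
      unfold dUp
      rw [if_neg hne]
      refine EReal.eq_top_of_forall_nat fun n => ?_
      refine Filter.le_limsup_of_frequently_le' ?_
      rw [(nhdsGT_basis (0:ℝ)).frequently_iff]
      intro a ha
      obtain ⟨k, hk⟩ := exists_nat_one_div_lt (lt_min ha one_pos : (0:ℝ) < min a 1)
      obtain ⟨ε, hε0, hεk, hlt⟩ := hAmed n k
      have hεa : ε < a := lt_of_lt_of_le (lt_trans hεk hk) (min_le_left _ _)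
      have hε1 : ε < 1 := lt_of_lt_of_le (lt_trans hεk hk) (min_le_right _ _)
      refine ⟨ε, ⟨hε0, hεa⟩, ?_⟩
      rw [EReal.coe_le_coe_iff]
      have hμpos : 0 < ((μm ψ) (Metric.ball x ε)).toReal :=
        ENNReal.toReal_pos (hpos ε hε0) (measure_ne_top _ _)
      have hεlog : Real.log ε < 0 := Real.log_neg hε0 hε1
      have h1 : Real.log (((μm ψ) (Metric.ball x ε)).toReal) < ((n:ℝ)+1) * Real.log ε := by
        have h2 := Real.log_lt_log hμpos hlt
        rw [Real.log_pow] at h2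
        push_cast at h2
        exact h2
      rw [le_div_iff_of_neg hεlog]
      nlinarith
  · -- Gδ
    exact IsGδ.iInter fun p => ((GAset_open T x p.1 p.2).inter (GBset_open T x p.1 p.2)).isGδ
  · -- dense
    exact dense_iInter_of_isOpen
      (fun p => (GAset_open T x p.1 p.2).inter (GBset_open T x p.1 p.2))
      (fun p => (hGAdense p.1 p.2).inter_of_isOpen_left (hGBdense p.1 p.2)
        (GAset_open T x p.1 p.2))
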